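/- arXiv:1410.7535 — 2 statements merged into one kernel-verified Lean document; each statement's English description precedes it below -/
import Mathlib

section
/- In the odd unimodular lattice I_{2,10} with basis h₁,h₂,e₁,…,e₁₀, let v₁ = 2h₁+2h₂−e₁−e₂−e₃−e₄−e₅ and v₂ = 2h₁−2h₂−e₆−e₇−e₈−e₉−e₁₀, and let M = {x ∈ ℤ¹² : B(x,v₁) = B(x,v₂) = 0} be their orthogonal complement. Let R ⊆ ℤ¹² be the ℤ-span of the ten vectors r₁ = e₁−e₂, r₂ = e₂−e₃, r₃ = e₃−e₄, r₄ = e₄−e₅, r₅ = h₁+h₂−e₁−e₂−e₃−e₄, r₆ = e₆−e₇, r₇ = e₇−e₈, r₈ = e₈−e₉, r₉ = e₉−e₁₀, r₁₀ = h₁−h₂−e₆−e₇−e₈−e₉, and let w = h₁−e₂−e₄−e₆−e₈. Then: (a) R ⊆ M and w ∈ M; (b) each rᵢ satisfies B(rᵢ,rᵢ) = −2, and the Gram matrix of (r₁,…,r₁₀) is that of the root lattice A₅ ⊕ A₅ (B(rᵢ,r_{i+1}) = 1 for i ∈ {1,2,3,4} and i ∈ {6,7,8,9}, and all other pairings among distinct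 rᵢ are 0); (c) w ∉ R; and (d) M = R + ℤw, so R has index 2 in M. -/
namespace Stmt17

/-- The diagonal signs of the bilinear form of `I_{2,10}`: `+1` on the first two coordinates
(the hyperbolic part `h₁, h₂`) and `-1` on the remaining ten (`e₁, …, e₁₀`). -/
def sgn (i : Fin 12) : ℤ := if (i : ℕ) < 2 then 1 else -1

/-- The bilinear form of the odd unimodular lattice `I_{2,10}` on `ℤ¹²`. -/
def B (x y : Fin 12 → ℤ) : ℤ := ∑ i, sgn i * x i * y i

lemma B_add (x y z : Fin 12 → ℤ) : B (x + y) z = B x z + B y z := by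
  simp only [B, Pi.add_apply, ← Finset.sum_add_distrib]
  exact Finset.sum_congr rfl fun i _ => by ring

lemma B_smul (c : ℤ) (x y : Fin 12 → ℤ) : B (c • x) y = c * B x y := by
  simp only [B, Finset.mul_sum, Pi.smul_apply, smul_eq_mul]
  exact Finset.sum_congr rfl fun i _ => by ring

/-- `v₁ = 2h₁ + 2h₂ − e₁ − e₂ − e₃ − e₄ − e₅`. -/
def v₁ : Fin 12 → ℤ := ![2, 2, -1, -1, -1, -1, -1, 0, 0, 0, 0, 0]

/-- `v₂ = 2h₁ − 2h₂ − e₆ − e₇ − e₈ − e₉ − e₁₀`. -/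
def v₂ : Fin 12 → ℤ := ![2, -2, 0, 0, 0, 0, 0, -1, -1, -1, -1, -1]

/-- The orthogonal complement `M` of `v₁` and `v₂` in `I_{2,10}`. -/
def M : Submodule ℤ (Fin 12 → ℤ) where
  carrier := {x | B x v₁ = 0 ∧ B x v₂ = 0}
  zero_mem' := by
    constructor <;> simp [B]
  add_mem' := by
    rintro a b ⟨ha1, ha2⟩ ⟨hb1, hb2⟩
    exact ⟨by rw [B_add, ha1, hb1, add_zero], by rw [B_add, ha2, hb2, add_zero]⟩
  smul_mem' := by
    rintro c a ⟨ha1, ha2⟩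
    exact ⟨by rw [B_smul, ha1, mul_zero], by rw [B_smul, ha2, mul_zero]⟩

/-- The ten vectors `r₁, …, r₁₀` spanning a root system of type `A₅ ⊕ A₅`. -/
def r : Fin 10 → (Fin 12 → ℤ) :=
  ![![0, 0, 1, -1, 0, 0, 0, 0, 0, 0, 0, 0],
    ![0, 0, 0, 1, -1, 0, 0, 0, 0, 0, 0, 0],
    ![0, 0, 0, 0, 1, -1, 0, 0, 0, 0, 0, 0],
    ![0, 0, 0, 0, 0, 1, -1, 0, 0, 0, 0, 0],
    ![1, 1, -1, -1, -1, -1, 0, 0, 0, 0, 0, 0],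
    ![0, 0, 0, 0, 0, 0, 0, 1, -1, 0, 0, 0],
    ![0, 0, 0, 0, 0, 0, 0, 0, 1, -1, 0, 0],
    ![0, 0, 0, 0, 0, 0, 0, 0, 0, 1, -1, 0],
    ![0, 0, 0, 0, 0, 0, 0, 0, 0, 0, 1, -1],
    ![1, -1, 0, 0, 0, 0, 0, -1, -1, -1, -1, 0]]

/-- `w = h₁ − e₂ − e₄ − e₆ − e₈`. -/
def w : Fin 12 → ℤ := ![1, 0, 0, -1, 0, -1, 0, -1, 0, -1, 0, 0]

/-- The sublattice `R` spanned by `r₁, …, r₁₀`. -/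
def R : Submodule ℤ (Fin 12 → ℤ) := Submodule.span ℤ (Set.range r)

/-- The Gram matrix of the root lattice `A₅ ⊕ A₅` in the basis `r₁, …, r₁₀`: diagonal `−2`,
entries `1` for neighbouring indices within each of the two blocks `{1,…,5}`, `{6,…,10}`,
and `0` otherwise. -/
def gram (i j : Fin 10) : ℤ :=
  if i = j then -2
  else if (((i : ℕ) < 5) ↔ ((j : ℕ) < 5)) ∧ ((i : ℕ) + 1 = (j : ℕ) ∨ (j : ℕ) + 1 = (i : ℕ))
    then 1 else 0


/-- Coefficient of `w` in the canonical decomposition of an element of `M`. -/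
def cw (x : Fin 12 → ℤ) : ℤ :=
  -7*x 0 - 7*x 1 - 8*x 3 - 8*x 4 - 8*x 5 - 8*x 6 - 8*x 8 - 8*x 9 - 8*x 10 - 8*x 11

/-- The `R`-part in the canonical decomposition of an element of `M`. -/
def rho (x : Fin 12 → ℤ) : Fin 12 → ℤ :=
  (2*x 0+2*x 1+3*x 3+3*x 4+3*x 5+3*x 6+4*x 8+4*x 9+4*x 10+4*x 11) • r 0 +
  (-x 0-x 1-x 4-x 5-x 6) • r 1 +
  (3*x 0+3*x 1+4*x 3+4*x 4+3*x 5+3*x 6+4*x 8+4*x 9+4*x 10+4*x 11) • r 2 +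
  (-x 6) • r 3 +
  (4*x 0+4*x 1+4*x 3+4*x 4+4*x 5+4*x 6+4*x 8+4*x 9+4*x 10+4*x 11) • r 4 +
  (-5*x 0-2*x 1-4*x 3-4*x 4-4*x 5-4*x 6-5*x 8-5*x 9-5*x 10-5*x 11) • r 5 +
  (-x 0+x 1-x 9-x 10-x 11) • r 6 +
  (-4*x 0-3*x 1-4*x 3-4*x 4-4*x 5-4*x 6-4*x 8-4*x 9-5*x 10-5*x 11) • r 7 +
  (-x 11) • r 8 +
  (4*x 0+3*x 1+4*x 3+4*x 4+4*x 5+4*x 6+4*x 8+4*x 9+4*x 10+4*x 11) • r 9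

@[simp] lemma fsucc_3_2 : Fin.succ (2 : Fin 3) = (3 : Fin 4) := rfl
@[simp] lemma fsucc_4_2 : Fin.succ (2 : Fin 4) = (3 : Fin 5) := rfl
@[simp] lemma fsucc_4_3 : Fin.succ (3 : Fin 4) = (4 : Fin 5) := rfl
@[simp] lemma fsucc_5_2 : Fin.succ (2 : Fin 5) = (3 : Fin 6) := rfl
@[simp] lemma fsucc_5_3 : Fin.succ (3 : Fin 5) = (4 : Fin 6) := rfl
@[simp] lemma fsucc_5_4 : Fin.succ (4 : Fin 5) = (5 : Fin 6) := rfl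
@[simp] lemma fsucc_6_2 : Fin.succ (2 : Fin 6) = (3 : Fin 7) := rfl
@[simp] lemma fsucc_6_3 : Fin.succ (3 : Fin 6) = (4 : Fin 7) := rfl
@[simp] lemma fsucc_6_4 : Fin.succ (4 : Fin 6) = (5 : Fin 7) := rfl
@[simp] lemma fsucc_6_5 : Fin.succ (5 : Fin 6) = (6 : Fin 7) := rfl
@[simp] lemma fsucc_7_2 : Fin.succ (2 : Fin 7) = (3 : Fin 8) := rfl
@[simp] lemma fsucc_7_3 : Fin.succ (3 : Fin 7) = (4 : Fin 8) := rfl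
@[simp] lemma fsucc_7_4 : Fin.succ (4 : Fin 7) = (5 : Fin 8) := rfl
@[simp] lemma fsucc_7_5 : Fin.succ (5 : Fin 7) = (6 : Fin 8) := rfl
@[simp] lemma fsucc_7_6 : Fin.succ (6 : Fin 7) = (7 : Fin 8) := rfl
@[simp] lemma fsucc_8_2 : Fin.succ (2 : Fin 8) = (3 : Fin 9) := rfl
@[simp] lemma fsucc_8_3 : Fin.succ (3 : Fin 8) = (4 : Fin 9) := rfl
@[simp] lemma fsucc_8_4 : Fin.succ (4 : Fin 8) = (5 : Fin 9) := rfl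
@[simp] lemma fsucc_8_5 : Fin.succ (5 : Fin 8) = (6 : Fin 9) := rfl
@[simp] lemma fsucc_8_6 : Fin.succ (6 : Fin 8) = (7 : Fin 9) := rfl
@[simp] lemma fsucc_8_7 : Fin.succ (7 : Fin 8) = (8 : Fin 9) := rfl
@[simp] lemma fsucc_9_2 : Fin.succ (2 : Fin 9) = (3 : Fin 10) := rfl
@[simp] lemma fsucc_9_3 : Fin.succ (3 : Fin 9) = (4 : Fin 10) := rfl
@[simp] lemma fsucc_9_4 : Fin.succ (4 : Fin 9) = (5 : Fin 10) := rfl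
@[simp] lemma fsucc_9_5 : Fin.succ (5 : Fin 9) = (6 : Fin 10) := rfl
@[simp] lemma fsucc_9_6 : Fin.succ (6 : Fin 9) = (7 : Fin 10) := rfl
@[simp] lemma fsucc_9_7 : Fin.succ (7 : Fin 9) = (8 : Fin 10) := rfl
@[simp] lemma fsucc_9_8 : Fin.succ (8 : Fin 9) = (9 : Fin 10) := rfl
@[simp] lemma fsucc_10_2 : Fin.succ (2 : Fin 10) = (3 : Fin 11) := rfl
@[simp] lemma fsucc_10_3 : Fin.succ (3 : Fin 10) = (4 : Fin 11) := rfl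
@[simp] lemma fsucc_10_4 : Fin.succ (4 : Fin 10) = (5 : Fin 11) := rfl
@[simp] lemma fsucc_10_5 : Fin.succ (5 : Fin 10) = (6 : Fin 11) := rfl
@[simp] lemma fsucc_10_6 : Fin.succ (6 : Fin 10) = (7 : Fin 11) := rfl
@[simp] lemma fsucc_10_7 : Fin.succ (7 : Fin 10) = (8 : Fin 11) := rfl
@[simp] lemma fsucc_10_8 : Fin.succ (8 : Fin 10) = (9 : Fin 11) := rfl
@[simp] lemma fsucc_10_9 : Fin.succ (9 : Fin 10) = (10 : Fin 11) := rfl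
@[simp] lemma fsucc_11_2 : Fin.succ (2 : Fin 11) = (3 : Fin 12) := rfl
@[simp] lemma fsucc_11_3 : Fin.succ (3 : Fin 11) = (4 : Fin 12) := rfl
@[simp] lemma fsucc_11_4 : Fin.succ (4 : Fin 11) = (5 : Fin 12) := rfl
@[simp] lemma fsucc_11_5 : Fin.succ (5 : Fin 11) = (6 : Fin 12) := rfl
@[simp] lemma fsucc_11_6 : Fin.succ (6 : Fin 11) = (7 : Fin 12) := rfl
@[simp] lemma fsucc_11_7 : Fin.succ (7 : Fin 11) = (8 : Fin 12) := rfl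
@[simp] lemma fsucc_11_8 : Fin.succ (8 : Fin 11) = (9 : Fin 12) := rfl
@[simp] lemma fsucc_11_9 : Fin.succ (9 : Fin 11) = (10 : Fin 12) := rfl
@[simp] lemma fsucc_11_10 : Fin.succ (10 : Fin 11) = (11 : Fin 12) := rfl

lemma fm_0 : (⟨0, by norm_num⟩ : Fin 12) = (0 : Fin 12) := rfl
lemma fm_1 : (⟨1, by norm_num⟩ : Fin 12) = (1 : Fin 12) := rfl
lemma fm_2 : (⟨2, by norm_num⟩ : Fin 12) = (2 : Fin 12) := rfl
lemma fm_3 : (⟨3, by norm_num⟩ : Fin 12) = (3 : Fin 12) := rfl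
lemma fm_4 : (⟨4, by norm_num⟩ : Fin 12) = (4 : Fin 12) := rfl
lemma fm_5 : (⟨5, by norm_num⟩ : Fin 12) = (5 : Fin 12) := rfl
lemma fm_6 : (⟨6, by norm_num⟩ : Fin 12) = (6 : Fin 12) := rfl
lemma fm_7 : (⟨7, by norm_num⟩ : Fin 12) = (7 : Fin 12) := rfl
lemma fm_8 : (⟨8, by norm_num⟩ : Fin 12) = (8 : Fin 12) := rfl
lemma fm_9 : (⟨9, by norm_num⟩ : Fin 12) = (9 : Fin 12) := rfl
lemma fm_10 : (⟨10, by norm_num⟩ : Fin 12) = (10 : Fin 12) := rfl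
lemma fm_11 : (⟨11, by norm_num⟩ : Fin 12) = (11 : Fin 12) := rfl
lemma re_0_0 : r 0 (⟨0, by norm_num⟩ : Fin 12) = 0 := rfl
lemma rl_0_0 : r 0 (0 : Fin 12) = 0 := rfl
lemma re_0_1 : r 0 (⟨1, by norm_num⟩ : Fin 12) = 0 := rfl
lemma rl_0_1 : r 0 (1 : Fin 12) = 0 := rfl
lemma re_0_2 : r 0 (⟨2, by norm_num⟩ : Fin 12) = 1 := rfl
lemma rl_0_2 : r 0 (2 : Fin 12) = 1 := rfl
lemma re_0_3 : r 0 (⟨3, by norm_num⟩ : Fin 12) = -1 := rfl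
lemma rl_0_3 : r 0 (3 : Fin 12) = -1 := rfl
lemma re_0_4 : r 0 (⟨4, by norm_num⟩ : Fin 12) = 0 := rfl
lemma rl_0_4 : r 0 (4 : Fin 12) = 0 := rfl
lemma re_0_5 : r 0 (⟨5, by norm_num⟩ : Fin 12) = 0 := rfl
lemma rl_0_5 : r 0 (5 : Fin 12) = 0 := rfl
lemma re_0_6 : r 0 (⟨6, by norm_num⟩ : Fin 12) = 0 := rfl
lemma rl_0_6 : r 0 (6 : Fin 12) = 0 := rfl
lemma re_0_7 : r 0 (⟨7, by norm_num⟩ : Fin 12) = 0 := rfl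
lemma rl_0_7 : r 0 (7 : Fin 12) = 0 := rfl
lemma re_0_8 : r 0 (⟨8, by norm_num⟩ : Fin 12) = 0 := rfl
lemma rl_0_8 : r 0 (8 : Fin 12) = 0 := rfl
lemma re_0_9 : r 0 (⟨9, by norm_num⟩ : Fin 12) = 0 := rfl
lemma rl_0_9 : r 0 (9 : Fin 12) = 0 := rfl
lemma re_0_10 : r 0 (⟨10, by norm_num⟩ : Fin 12) = 0 := rfl
lemma rl_0_10 : r 0 (10 : Fin 12) = 0 := rfl
lemma re_0_11 : r 0 (⟨11, by norm_num⟩ : Fin 12) = 0 := rfl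
lemma rl_0_11 : r 0 (11 : Fin 12) = 0 := rfl
lemma re_1_0 : r 1 (⟨0, by norm_num⟩ : Fin 12) = 0 := rfl
lemma rl_1_0 : r 1 (0 : Fin 12) = 0 := rfl
lemma re_1_1 : r 1 (⟨1, by norm_num⟩ : Fin 12) = 0 := rfl
lemma rl_1_1 : r 1 (1 : Fin 12) = 0 := rfl
lemma re_1_2 : r 1 (⟨2, by norm_num⟩ : Fin 12) = 0 := rfl
lemma rl_1_2 : r 1 (2 : Fin 12) = 0 := rfl
lemma re_1_3 : r 1 (⟨3, by norm_num⟩ : Fin 12) = 1 := rfl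
lemma rl_1_3 : r 1 (3 : Fin 12) = 1 := rfl
lemma re_1_4 : r 1 (⟨4, by norm_num⟩ : Fin 12) = -1 := rfl
lemma rl_1_4 : r 1 (4 : Fin 12) = -1 := rfl
lemma re_1_5 : r 1 (⟨5, by norm_num⟩ : Fin 12) = 0 := rfl
lemma rl_1_5 : r 1 (5 : Fin 12) = 0 := rfl
lemma re_1_6 : r 1 (⟨6, by norm_num⟩ : Fin 12) = 0 := rfl
lemma rl_1_6 : r 1 (6 : Fin 12) = 0 := rfl
lemma re_1_7 : r 1 (⟨7, by norm_num⟩ : Fin 12) = 0 := rfl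
lemma rl_1_7 : r 1 (7 : Fin 12) = 0 := rfl
lemma re_1_8 : r 1 (⟨8, by norm_num⟩ : Fin 12) = 0 := rfl
lemma rl_1_8 : r 1 (8 : Fin 12) = 0 := rfl
lemma re_1_9 : r 1 (⟨9, by norm_num⟩ : Fin 12) = 0 := rfl
lemma rl_1_9 : r 1 (9 : Fin 12) = 0 := rfl
lemma re_1_10 : r 1 (⟨10, by norm_num⟩ : Fin 12) = 0 := rfl
lemma rl_1_10 : r 1 (10 : Fin 12) = 0 := rfl
lemma re_1_11 : r 1 (⟨11, by norm_num⟩ : Fin 12) = 0 := rfl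
lemma rl_1_11 : r 1 (11 : Fin 12) = 0 := rfl
lemma re_2_0 : r 2 (⟨0, by norm_num⟩ : Fin 12) = 0 := rfl
lemma rl_2_0 : r 2 (0 : Fin 12) = 0 := rfl
lemma re_2_1 : r 2 (⟨1, by norm_num⟩ : Fin 12) = 0 := rfl
lemma rl_2_1 : r 2 (1 : Fin 12) = 0 := rfl
lemma re_2_2 : r 2 (⟨2, by norm_num⟩ : Fin 12) = 0 := rfl
lemma rl_2_2 : r 2 (2 : Fin 12) = 0 := rfl
lemma re_2_3 : r 2 (⟨3, by norm_num⟩ : Fin 12) = 0 := rfl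
lemma rl_2_3 : r 2 (3 : Fin 12) = 0 := rfl
lemma re_2_4 : r 2 (⟨4, by norm_num⟩ : Fin 12) = 1 := rfl
lemma rl_2_4 : r 2 (4 : Fin 12) = 1 := rfl
lemma re_2_5 : r 2 (⟨5, by norm_num⟩ : Fin 12) = -1 := rfl
lemma rl_2_5 : r 2 (5 : Fin 12) = -1 := rfl
lemma re_2_6 : r 2 (⟨6, by norm_num⟩ : Fin 12) = 0 := rfl
lemma rl_2_6 : r 2 (6 : Fin 12) = 0 := rfl
lemma re_2_7 : r 2 (⟨7, by norm_num⟩ : Fin 12) = 0 := rfl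
lemma rl_2_7 : r 2 (7 : Fin 12) = 0 := rfl
lemma re_2_8 : r 2 (⟨8, by norm_num⟩ : Fin 12) = 0 := rfl
lemma rl_2_8 : r 2 (8 : Fin 12) = 0 := rfl
lemma re_2_9 : r 2 (⟨9, by norm_num⟩ : Fin 12) = 0 := rfl
lemma rl_2_9 : r 2 (9 : Fin 12) = 0 := rfl
lemma re_2_10 : r 2 (⟨10, by norm_num⟩ : Fin 12) = 0 := rfl
lemma rl_2_10 : r 2 (10 : Fin 12) = 0 := rfl
lemma re_2_11 : r 2 (⟨11, by norm_num⟩ : Fin 12) = 0 := rfl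
lemma rl_2_11 : r 2 (11 : Fin 12) = 0 := rfl
lemma re_3_0 : r 3 (⟨0, by norm_num⟩ : Fin 12) = 0 := rfl
lemma rl_3_0 : r 3 (0 : Fin 12) = 0 := rfl
lemma re_3_1 : r 3 (⟨1, by norm_num⟩ : Fin 12) = 0 := rfl
lemma rl_3_1 : r 3 (1 : Fin 12) = 0 := rfl
lemma re_3_2 : r 3 (⟨2, by norm_num⟩ : Fin 12) = 0 := rfl
lemma rl_3_2 : r 3 (2 : Fin 12) = 0 := rfl
lemma re_3_3 : r 3 (⟨3, by norm_num⟩ : Fin 12) = 0 := rfl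
lemma rl_3_3 : r 3 (3 : Fin 12) = 0 := rfl
lemma re_3_4 : r 3 (⟨4, by norm_num⟩ : Fin 12) = 0 := rfl
lemma rl_3_4 : r 3 (4 : Fin 12) = 0 := rfl
lemma re_3_5 : r 3 (⟨5, by norm_num⟩ : Fin 12) = 1 := rfl
lemma rl_3_5 : r 3 (5 : Fin 12) = 1 := rfl
lemma re_3_6 : r 3 (⟨6, by norm_num⟩ : Fin 12) = -1 := rfl
lemma rl_3_6 : r 3 (6 : Fin 12) = -1 := rfl
lemma re_3_7 : r 3 (⟨7, by norm_num⟩ : Fin 12) = 0 := rfl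
lemma rl_3_7 : r 3 (7 : Fin 12) = 0 := rfl
lemma re_3_8 : r 3 (⟨8, by norm_num⟩ : Fin 12) = 0 := rfl
lemma rl_3_8 : r 3 (8 : Fin 12) = 0 := rfl
lemma re_3_9 : r 3 (⟨9, by norm_num⟩ : Fin 12) = 0 := rfl
lemma rl_3_9 : r 3 (9 : Fin 12) = 0 := rfl
lemma re_3_10 : r 3 (⟨10, by norm_num⟩ : Fin 12) = 0 := rfl
lemma rl_3_10 : r 3 (10 : Fin 12) = 0 := rfl
lemma re_3_11 : r 3 (⟨11, by norm_num⟩ : Fin 12) = 0 := rfl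
lemma rl_3_11 : r 3 (11 : Fin 12) = 0 := rfl
lemma re_4_0 : r 4 (⟨0, by norm_num⟩ : Fin 12) = 1 := rfl
lemma rl_4_0 : r 4 (0 : Fin 12) = 1 := rfl
lemma re_4_1 : r 4 (⟨1, by norm_num⟩ : Fin 12) = 1 := rfl
lemma rl_4_1 : r 4 (1 : Fin 12) = 1 := rfl
lemma re_4_2 : r 4 (⟨2, by norm_num⟩ : Fin 12) = -1 := rfl
lemma rl_4_2 : r 4 (2 : Fin 12) = -1 := rfl
lemma re_4_3 : r 4 (⟨3, by norm_num⟩ : Fin 12) = -1 := rfl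
lemma rl_4_3 : r 4 (3 : Fin 12) = -1 := rfl
lemma re_4_4 : r 4 (⟨4, by norm_num⟩ : Fin 12) = -1 := rfl
lemma rl_4_4 : r 4 (4 : Fin 12) = -1 := rfl
lemma re_4_5 : r 4 (⟨5, by norm_num⟩ : Fin 12) = -1 := rfl
lemma rl_4_5 : r 4 (5 : Fin 12) = -1 := rfl
lemma re_4_6 : r 4 (⟨6, by norm_num⟩ : Fin 12) = 0 := rfl
lemma rl_4_6 : r 4 (6 : Fin 12) = 0 := rfl
lemma re_4_7 : r 4 (⟨7, by norm_num⟩ : Fin 12) = 0 := rfl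
lemma rl_4_7 : r 4 (7 : Fin 12) = 0 := rfl
lemma re_4_8 : r 4 (⟨8, by norm_num⟩ : Fin 12) = 0 := rfl
lemma rl_4_8 : r 4 (8 : Fin 12) = 0 := rfl
lemma re_4_9 : r 4 (⟨9, by norm_num⟩ : Fin 12) = 0 := rfl
lemma rl_4_9 : r 4 (9 : Fin 12) = 0 := rfl
lemma re_4_10 : r 4 (⟨10, by norm_num⟩ : Fin 12) = 0 := rfl
lemma rl_4_10 : r 4 (10 : Fin 12) = 0 := rfl
lemma re_4_11 : r 4 (⟨11, by norm_num⟩ : Fin 12) = 0 := rfl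
lemma rl_4_11 : r 4 (11 : Fin 12) = 0 := rfl
lemma re_5_0 : r 5 (⟨0, by norm_num⟩ : Fin 12) = 0 := rfl
lemma rl_5_0 : r 5 (0 : Fin 12) = 0 := rfl
lemma re_5_1 : r 5 (⟨1, by norm_num⟩ : Fin 12) = 0 := rfl
lemma rl_5_1 : r 5 (1 : Fin 12) = 0 := rfl
lemma re_5_2 : r 5 (⟨2, by norm_num⟩ : Fin 12) = 0 := rfl
lemma rl_5_2 : r 5 (2 : Fin 12) = 0 := rfl
lemma re_5_3 : r 5 (⟨3, by norm_num⟩ : Fin 12) = 0 := rfl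
lemma rl_5_3 : r 5 (3 : Fin 12) = 0 := rfl
lemma re_5_4 : r 5 (⟨4, by norm_num⟩ : Fin 12) = 0 := rfl
lemma rl_5_4 : r 5 (4 : Fin 12) = 0 := rfl
lemma re_5_5 : r 5 (⟨5, by norm_num⟩ : Fin 12) = 0 := rfl
lemma rl_5_5 : r 5 (5 : Fin 12) = 0 := rfl
lemma re_5_6 : r 5 (⟨6, by norm_num⟩ : Fin 12) = 0 := rfl
lemma rl_5_6 : r 5 (6 : Fin 12) = 0 := rfl
lemma re_5_7 : r 5 (⟨7, by norm_num⟩ : Fin 12) = 1 := rfl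
lemma rl_5_7 : r 5 (7 : Fin 12) = 1 := rfl
lemma re_5_8 : r 5 (⟨8, by norm_num⟩ : Fin 12) = -1 := rfl
lemma rl_5_8 : r 5 (8 : Fin 12) = -1 := rfl
lemma re_5_9 : r 5 (⟨9, by norm_num⟩ : Fin 12) = 0 := rfl
lemma rl_5_9 : r 5 (9 : Fin 12) = 0 := rfl
lemma re_5_10 : r 5 (⟨10, by norm_num⟩ : Fin 12) = 0 := rfl
lemma rl_5_10 : r 5 (10 : Fin 12) = 0 := rfl
lemma re_5_11 : r 5 (⟨11, by norm_num⟩ : Fin 12) = 0 := rfl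
lemma rl_5_11 : r 5 (11 : Fin 12) = 0 := rfl
lemma re_6_0 : r 6 (⟨0, by norm_num⟩ : Fin 12) = 0 := rfl
lemma rl_6_0 : r 6 (0 : Fin 12) = 0 := rfl
lemma re_6_1 : r 6 (⟨1, by norm_num⟩ : Fin 12) = 0 := rfl
lemma rl_6_1 : r 6 (1 : Fin 12) = 0 := rfl
lemma re_6_2 : r 6 (⟨2, by norm_num⟩ : Fin 12) = 0 := rfl
lemma rl_6_2 : r 6 (2 : Fin 12) = 0 := rfl
lemma re_6_3 : r 6 (⟨3, by norm_num⟩ : Fin 12) = 0 := rfl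
lemma rl_6_3 : r 6 (3 : Fin 12) = 0 := rfl
lemma re_6_4 : r 6 (⟨4, by norm_num⟩ : Fin 12) = 0 := rfl
lemma rl_6_4 : r 6 (4 : Fin 12) = 0 := rfl
lemma re_6_5 : r 6 (⟨5, by norm_num⟩ : Fin 12) = 0 := rfl
lemma rl_6_5 : r 6 (5 : Fin 12) = 0 := rfl
lemma re_6_6 : r 6 (⟨6, by norm_num⟩ : Fin 12) = 0 := rfl
lemma rl_6_6 : r 6 (6 : Fin 12) = 0 := rfl
lemma re_6_7 : r 6 (⟨7, by norm_num⟩ : Fin 12) = 0 := rfl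
lemma rl_6_7 : r 6 (7 : Fin 12) = 0 := rfl
lemma re_6_8 : r 6 (⟨8, by norm_num⟩ : Fin 12) = 1 := rfl
lemma rl_6_8 : r 6 (8 : Fin 12) = 1 := rfl
lemma re_6_9 : r 6 (⟨9, by norm_num⟩ : Fin 12) = -1 := rfl
lemma rl_6_9 : r 6 (9 : Fin 12) = -1 := rfl
lemma re_6_10 : r 6 (⟨10, by norm_num⟩ : Fin 12) = 0 := rfl
lemma rl_6_10 : r 6 (10 : Fin 12) = 0 := rfl
lemma re_6_11 : r 6 (⟨11, by norm_num⟩ : Fin 12) = 0 := rfl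
lemma rl_6_11 : r 6 (11 : Fin 12) = 0 := rfl
lemma re_7_0 : r 7 (⟨0, by norm_num⟩ : Fin 12) = 0 := rfl
lemma rl_7_0 : r 7 (0 : Fin 12) = 0 := rfl
lemma re_7_1 : r 7 (⟨1, by norm_num⟩ : Fin 12) = 0 := rfl
lemma rl_7_1 : r 7 (1 : Fin 12) = 0 := rfl
lemma re_7_2 : r 7 (⟨2, by norm_num⟩ : Fin 12) = 0 := rfl
lemma rl_7_2 : r 7 (2 : Fin 12) = 0 := rfl
lemma re_7_3 : r 7 (⟨3, by norm_num⟩ : Fin 12) = 0 := rfl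
lemma rl_7_3 : r 7 (3 : Fin 12) = 0 := rfl
lemma re_7_4 : r 7 (⟨4, by norm_num⟩ : Fin 12) = 0 := rfl
lemma rl_7_4 : r 7 (4 : Fin 12) = 0 := rfl
lemma re_7_5 : r 7 (⟨5, by norm_num⟩ : Fin 12) = 0 := rfl
lemma rl_7_5 : r 7 (5 : Fin 12) = 0 := rfl
lemma re_7_6 : r 7 (⟨6, by norm_num⟩ : Fin 12) = 0 := rfl
lemma rl_7_6 : r 7 (6 : Fin 12) = 0 := rfl
lemma re_7_7 : r 7 (⟨7, by norm_num⟩ : Fin 12) = 0 := rfl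
lemma rl_7_7 : r 7 (7 : Fin 12) = 0 := rfl
lemma re_7_8 : r 7 (⟨8, by norm_num⟩ : Fin 12) = 0 := rfl
lemma rl_7_8 : r 7 (8 : Fin 12) = 0 := rfl
lemma re_7_9 : r 7 (⟨9, by norm_num⟩ : Fin 12) = 1 := rfl
lemma rl_7_9 : r 7 (9 : Fin 12) = 1 := rfl
lemma re_7_10 : r 7 (⟨10, by norm_num⟩ : Fin 12) = -1 := rfl
lemma rl_7_10 : r 7 (10 : Fin 12) = -1 := rfl
lemma re_7_11 : r 7 (⟨11, by norm_num⟩ : Fin 12) = 0 := rfl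
lemma rl_7_11 : r 7 (11 : Fin 12) = 0 := rfl
lemma re_8_0 : r 8 (⟨0, by norm_num⟩ : Fin 12) = 0 := rfl
lemma rl_8_0 : r 8 (0 : Fin 12) = 0 := rfl
lemma re_8_1 : r 8 (⟨1, by norm_num⟩ : Fin 12) = 0 := rfl
lemma rl_8_1 : r 8 (1 : Fin 12) = 0 := rfl
lemma re_8_2 : r 8 (⟨2, by norm_num⟩ : Fin 12) = 0 := rfl
lemma rl_8_2 : r 8 (2 : Fin 12) = 0 := rfl
lemma re_8_3 : r 8 (⟨3, by norm_num⟩ : Fin 12) = 0 := rfl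
lemma rl_8_3 : r 8 (3 : Fin 12) = 0 := rfl
lemma re_8_4 : r 8 (⟨4, by norm_num⟩ : Fin 12) = 0 := rfl
lemma rl_8_4 : r 8 (4 : Fin 12) = 0 := rfl
lemma re_8_5 : r 8 (⟨5, by norm_num⟩ : Fin 12) = 0 := rfl
lemma rl_8_5 : r 8 (5 : Fin 12) = 0 := rfl
lemma re_8_6 : r 8 (⟨6, by norm_num⟩ : Fin 12) = 0 := rfl
lemma rl_8_6 : r 8 (6 : Fin 12) = 0 := rfl
lemma re_8_7 : r 8 (⟨7, by norm_num⟩ : Fin 12) = 0 := rfl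
lemma rl_8_7 : r 8 (7 : Fin 12) = 0 := rfl
lemma re_8_8 : r 8 (⟨8, by norm_num⟩ : Fin 12) = 0 := rfl
lemma rl_8_8 : r 8 (8 : Fin 12) = 0 := rfl
lemma re_8_9 : r 8 (⟨9, by norm_num⟩ : Fin 12) = 0 := rfl
lemma rl_8_9 : r 8 (9 : Fin 12) = 0 := rfl
lemma re_8_10 : r 8 (⟨10, by norm_num⟩ : Fin 12) = 1 := rfl
lemma rl_8_10 : r 8 (10 : Fin 12) = 1 := rfl
lemma re_8_11 : r 8 (⟨11, by norm_num⟩ : Fin 12) = -1 := rfl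
lemma rl_8_11 : r 8 (11 : Fin 12) = -1 := rfl
lemma re_9_0 : r 9 (⟨0, by norm_num⟩ : Fin 12) = 1 := rfl
lemma rl_9_0 : r 9 (0 : Fin 12) = 1 := rfl
lemma re_9_1 : r 9 (⟨1, by norm_num⟩ : Fin 12) = -1 := rfl
lemma rl_9_1 : r 9 (1 : Fin 12) = -1 := rfl
lemma re_9_2 : r 9 (⟨2, by norm_num⟩ : Fin 12) = 0 := rfl
lemma rl_9_2 : r 9 (2 : Fin 12) = 0 := rfl
lemma re_9_3 : r 9 (⟨3, by norm_num⟩ : Fin 12) = 0 := rfl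
lemma rl_9_3 : r 9 (3 : Fin 12) = 0 := rfl
lemma re_9_4 : r 9 (⟨4, by norm_num⟩ : Fin 12) = 0 := rfl
lemma rl_9_4 : r 9 (4 : Fin 12) = 0 := rfl
lemma re_9_5 : r 9 (⟨5, by norm_num⟩ : Fin 12) = 0 := rfl
lemma rl_9_5 : r 9 (5 : Fin 12) = 0 := rfl
lemma re_9_6 : r 9 (⟨6, by norm_num⟩ : Fin 12) = 0 := rfl
lemma rl_9_6 : r 9 (6 : Fin 12) = 0 := rfl
lemma re_9_7 : r 9 (⟨7, by norm_num⟩ : Fin 12) = -1 := rfl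
lemma rl_9_7 : r 9 (7 : Fin 12) = -1 := rfl
lemma re_9_8 : r 9 (⟨8, by norm_num⟩ : Fin 12) = -1 := rfl
lemma rl_9_8 : r 9 (8 : Fin 12) = -1 := rfl
lemma re_9_9 : r 9 (⟨9, by norm_num⟩ : Fin 12) = -1 := rfl
lemma rl_9_9 : r 9 (9 : Fin 12) = -1 := rfl
lemma re_9_10 : r 9 (⟨10, by norm_num⟩ : Fin 12) = -1 := rfl
lemma rl_9_10 : r 9 (10 : Fin 12) = -1 := rfl
lemma re_9_11 : r 9 (⟨11, by norm_num⟩ : Fin 12) = 0 := rfl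
lemma rl_9_11 : r 9 (11 : Fin 12) = 0 := rfl
lemma we_0 : w (⟨0, by norm_num⟩ : Fin 12) = 1 := rfl
lemma wl_0 : w (0 : Fin 12) = 1 := rfl
lemma we_1 : w (⟨1, by norm_num⟩ : Fin 12) = 0 := rfl
lemma wl_1 : w (1 : Fin 12) = 0 := rfl
lemma we_2 : w (⟨2, by norm_num⟩ : Fin 12) = 0 := rfl
lemma wl_2 : w (2 : Fin 12) = 0 := rfl
lemma we_3 : w (⟨3, by norm_num⟩ : Fin 12) = -1 := rfl
lemma wl_3 : w (3 : Fin 12) = -1 := rfl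
lemma we_4 : w (⟨4, by norm_num⟩ : Fin 12) = 0 := rfl
lemma wl_4 : w (4 : Fin 12) = 0 := rfl
lemma we_5 : w (⟨5, by norm_num⟩ : Fin 12) = -1 := rfl
lemma wl_5 : w (5 : Fin 12) = -1 := rfl
lemma we_6 : w (⟨6, by norm_num⟩ : Fin 12) = 0 := rfl
lemma wl_6 : w (6 : Fin 12) = 0 := rfl
lemma we_7 : w (⟨7, by norm_num⟩ : Fin 12) = -1 := rfl
lemma wl_7 : w (7 : Fin 12) = -1 := rfl
lemma we_8 : w (⟨8, by norm_num⟩ : Fin 12) = 0 := rfl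
lemma wl_8 : w (8 : Fin 12) = 0 := rfl
lemma we_9 : w (⟨9, by norm_num⟩ : Fin 12) = -1 := rfl
lemma wl_9 : w (9 : Fin 12) = -1 := rfl
lemma we_10 : w (⟨10, by norm_num⟩ : Fin 12) = 0 := rfl
lemma wl_10 : w (10 : Fin 12) = 0 := rfl
lemma we_11 : w (⟨11, by norm_num⟩ : Fin 12) = 0 := rfl
lemma wl_11 : w (11 : Fin 12) = 0 := rfl


lemma r_mem_R (i : Fin 10) : r i ∈ R := Submodule.subset_span ⟨i, rfl⟩

lemma rho_mem_R (x : Fin 12 → ℤ) : rho x ∈ R := by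
  unfold rho
  repeat' apply Submodule.add_mem
  all_goals exact Submodule.smul_mem _ _ (r_mem_R _)

lemma two_w_mem_R : (2 : ℤ) • w ∈ R := by
  have h : (2 : ℤ) • w = r 0 + r 2 + r 4 - r 5 - r 7 + r 9 := by
    funext j; fin_cases j <;> decide
  rw [h]
  have h0 := r_mem_R 0; have h2 := r_mem_R 2; have h4 := r_mem_R 4
  have h5 := r_mem_R 5; have h7 := r_mem_R 7; have h9 := r_mem_R 9
  exact Submodule.add_mem _ (Submodule.sub_mem _ (Submodule.sub_mem _
    (Submodule.add_mem _ (Submodule.add_mem _ h0 h2) h4) h5) h7) h9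

lemma mem_M_iff (x : Fin 12 → ℤ) :
    x ∈ M ↔ (2*x 0 + 2*x 1 + x 2 + x 3 + x 4 + x 5 + x 6 = 0 ∧
      2*x 0 - 2*x 1 + x 7 + x 8 + x 9 + x 10 + x 11 = 0) := by
  constructor
  · rintro ⟨h1, h2⟩
    simp [B, sgn, v₁, v₂, Fin.sum_univ_succ] at h1 h2
    constructor <;> linarith
  · rintro ⟨h1, h2⟩
    constructor <;> (simp [B, sgn, v₁, v₂, Fin.sum_univ_succ]; linarith)

set_option maxHeartbeats 1000000 in
lemma decomp (x : Fin 12 → ℤ) (hx : x ∈ M) : x = rho x + cw x • w := by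
  obtain ⟨h1, h2⟩ := (mem_M_iff x).mp hx
  funext j
  fin_cases j <;>
    (simp only [rho, cw, Pi.add_apply, Pi.smul_apply, smul_eq_mul];
     simp only [fm_0, fm_1, fm_2, fm_3, fm_4, fm_5, fm_6, fm_7, fm_8, fm_9, fm_10, fm_11, re_0_0, rl_0_0, re_0_1, rl_0_1, re_0_2, rl_0_2, re_0_3, rl_0_3, re_0_4, rl_0_4, re_0_5, rl_0_5, re_0_6, rl_0_6, re_0_7, rl_0_7, re_0_8, rl_0_8, re_0_9, rl_0_9, re_0_10, rl_0_10, re_0_11, rl_0_11, re_1_0, rl_1_0, re_1_1, rl_1_1, re_1_2, rl_1_2, re_1_3, rl_1_3, re_1_4, rl_1_4, re_1_5, rl_1_5, re_1_6, rl_1_6, re_1_7, rl_1_7, re_1_8, rl_1_8, re_1_9, rl_1_9, re_1_10, rl_1_10, re_1_11, rl_1_11, re_2_0, rl_2_0, re_2_1, rl_2_1, re_2_2, rl_2_2, re_2_3, rl_2_3, re_2_4, rl_2_4, re_2_5, rl_2_5, re_2_6, rl_2_6, re_2_7, rl_2_7, re_2_8, rl_2_8, re_2_9, rl_2_9, re_2_10,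 rl_2_10, re_2_11, rl_2_11, re_3_0, rl_3_0, re_3_1, rl_3_1, re_3_2, rl_3_2, re_3_3, rl_3_3, re_3_4, rl_3_4, re_3_5, rl_3_5, re_3_6, rl_3_6, re_3_7, rl_3_7, re_3_8, rl_3_8, re_3_9, rl_3_9, re_3_10, rl_3_10, re_3_11, rl_3_11, re_4_0, rl_4_0, re_4_1, rl_4_1, re_4_2, rl_4_2, re_4_3, rl_4_3, re_4_4, rl_4_4, re_4_5, rl_4_5, re_4_6, rl_4_6, re_4_7, rl_4_7, re_4_8, rl_4_8, re_4_9, rl_4_9, re_4_10, rl_4_10, re_4_11, rl_4_11, re_5_0, rl_5_0, re_5_1, rl_5_1, re_5_2, rl_5_2, re_5_3, rl_5_3, re_5_4, rl_5_4, re_5_5, rl_5_5, re_5_6, rl_5_6, re_5_7, rl_5_7, re_5_8, rl_5_8, re_5_9, rl_5_9, re_5_10, rl_5_10, re_5_11, rl_5_11, re_6_0, rl_6_0, re_6_1, rl_6_1, re_6_2, rl_6_2, re_6_3, rl_6_3, re_6_4, rl_6_4, re_6_5, rl_6_5, re_6_6, rl_6_6, re_6_7, rl_6_7, re_6_8, rl_6_8,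 re_6_9, rl_6_9, re_6_10, rl_6_10, re_6_11, rl_6_11, re_7_0, rl_7_0, re_7_1, rl_7_1, re_7_2, rl_7_2, re_7_3, rl_7_3, re_7_4, rl_7_4, re_7_5, rl_7_5, re_7_6, rl_7_6, re_7_7, rl_7_7, re_7_8, rl_7_8, re_7_9, rl_7_9, re_7_10, rl_7_10, re_7_11, rl_7_11, re_8_0, rl_8_0, re_8_1, rl_8_1, re_8_2, rl_8_2, re_8_3, rl_8_3, re_8_4, rl_8_4, re_8_5, rl_8_5, re_8_6, rl_8_6, re_8_7, rl_8_7, re_8_8, rl_8_8, re_8_9, rl_8_9, re_8_10, rl_8_10, re_8_11, rl_8_11, re_9_0, rl_9_0, re_9_1, rl_9_1, re_9_2, rl_9_2, re_9_3, rl_9_3, re_9_4, rl_9_4, re_9_5, rl_9_5, re_9_6, rl_9_6, re_9_7, rl_9_7, re_9_8, rl_9_8, re_9_9, rl_9_9, re_9_10, rl_9_10, re_9_11, rl_9_11, we_0, wl_0, we_1, wl_1, we_2, wl_2, we_3, wl_3, we_4, wl_4, we_5, wl_5, we_6, wl_6, we_7, wl_7, we_8, wl_8, we_9, wl_9, we_10,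 wl_10, we_11, wl_11]; linarith)

lemma R_parity {x : Fin 12 → ℤ} (hx : x ∈ R) : (2 : ℤ) ∣ (x 0 + x 1) := by
  induction hx using Submodule.span_induction with
  | mem y hy => obtain ⟨i, rfl⟩ := hy; fin_cases i <;> decide
  | zero => simp
  | add y z _ _ hy hz => simpa [add_add_add_comm] using dvd_add hy hz
  | smul c y _ hy =>
      simpa [Pi.smul_apply, smul_eq_mul, mul_add] using Dvd.dvd.mul_left hy c

lemma mem_R_of_even {x : Fin 12 → ℤ} (hx : x ∈ M) (he : (2:ℤ) ∣ (x 0 + x 1)) : x ∈ R := by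
  have hcw : (2:ℤ) ∣ cw x := by unfold cw; omega
  obtain ⟨k, hk⟩ := hcw
  have hd := decomp x hx
  rw [hk] at hd
  have h2k : (2 * k) • w = k • ((2:ℤ) • w) := by rw [smul_smul, mul_comm]
  rw [h2k] at hd
  rw [hd]
  exact Submodule.add_mem _ (rho_mem_R x) (Submodule.smul_mem _ _ two_w_mem_R)

lemma w_mem_M : w ∈ M := by rw [mem_M_iff]; decide

lemma w_not_mem_R : w ∉ R := by
  intro h
  have h2 := R_parity h
  rw [wl_0, wl_1] at h2
  omega

lemma r_mem_M (i : Fin 10) : r i ∈ M := by rw [mem_M_iff]; fin_cases i <;> decide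

lemma R_le_M : R ≤ M := by
  rw [R, Submodule.span_le]
  rintro _ ⟨i, rfl⟩
  exact r_mem_M i

lemma M_eq : M = R ⊔ Submodule.span ℤ {w} := by
  apply le_antisymm
  · intro x hx
    rw [decomp x hx]
    exact Submodule.add_mem _ (Submodule.mem_sup_left (rho_mem_R x))
      (Submodule.mem_sup_right (Submodule.smul_mem _ _ (Submodule.mem_span_singleton_self w)))
  · exact sup_le R_le_M ((Submodule.span_singleton_le_iff_mem _ _).mpr w_mem_M)

/-- The parity homomorphism `M → ℤ/2`. -/
def φ : M.toAddSubgroup →+ ZMod 2 where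
  toFun x := (((x : Fin 12 → ℤ) 0 + (x : Fin 12 → ℤ) 1 : ℤ) : ZMod 2)
  map_zero' := by simp
  map_add' x y := by
    show ((((x : Fin 12 → ℤ) + (y : Fin 12 → ℤ)) 0 + ((x : Fin 12 → ℤ) + (y : Fin 12 → ℤ)) 1 : ℤ) : ZMod 2)
        = (((x : Fin 12 → ℤ) 0 + (x : Fin 12 → ℤ) 1 : ℤ) : ZMod 2)
          + (((y : Fin 12 → ℤ) 0 + (y : Fin 12 → ℤ) 1 : ℤ) : ZMod 2)
    push_cast [Pi.add_apply]
    ring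

lemma φ_apply (x : M.toAddSubgroup) :
    φ x = (((x : Fin 12 → ℤ) 0 + (x : Fin 12 → ℤ) 1 : ℤ) : ZMod 2) := rfl

lemma ker_φ : φ.ker = R.toAddSubgroup.addSubgroupOf M.toAddSubgroup := by
  ext x
  simp only [AddMonoidHom.mem_ker, AddSubgroup.mem_addSubgroupOf, φ_apply,
    Submodule.mem_toAddSubgroup, ZMod.intCast_zmod_eq_zero_iff_dvd]
  constructor
  · intro h
    exact mem_R_of_even ((Submodule.mem_toAddSubgroup M).mp x.2) (by exact_mod_cast h)
  · intro h
    exact_mod_cast R_parity h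

lemma φ_surj : Function.Surjective φ := by
  intro z
  have hz : ∀ u : ZMod 2, u = 0 ∨ u = 1 := by decide
  rcases hz z with rfl | rfl
  · exact ⟨0, map_zero φ⟩
  · refine ⟨⟨w, (Submodule.mem_toAddSubgroup M).mpr w_mem_M⟩, ?_⟩
    rw [φ_apply]
    norm_num [wl_0, wl_1]

lemma relindex_eq : AddSubgroup.relIndex R.toAddSubgroup M.toAddSubgroup = 2 := by
  rw [AddSubgroup.relIndex, ← ker_φ, AddSubgroup.index_ker,
    AddMonoidHom.range_eq_top.mpr φ_surj]
  rw [Nat.card_congr AddSubgroup.topEquiv.toEquiv, Nat.card_zmod]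

set_option maxHeartbeats 1000000 in
lemma gram_eq : ∀ i j : Fin 10, B (r i) (r j) = gram i j := by decide

/-- In `I_{2,10}`, the orthogonal complement `M` of `v₁, v₂` contains the `A₅ ⊕ A₅`
root lattice `R` spanned by `r₁, …, r₁₀` together with the glue vector
`w = h₁ − e₂ − e₄ − e₆ − e₈`, and `M = R + ℤw` with `R` of index 2 in `M`. -/
theorem orthogonal_complement_is_A5A5_plus_glue :
    (R ≤ M ∧ w ∈ M) ∧
    (∀ i j : Fin 10, B (r i) (r j) = gram i j) ∧
    w ∉ R ∧
    (M = R ⊔ Submodule.span ℤ {w} ∧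
      AddSubgroup.relIndex R.toAddSubgroup M.toAddSubgroup = 2) := by
  exact ⟨⟨R_le_M, w_mem_M⟩, gram_eq, w_not_mem_R, M_eq, relindex_eq⟩

end Stmt17
end

section
/- In the odd unimodular lattice I_{2,10} with basis h₁,h₂,e₁,…,e₁₀, let rᵢ = eᵢ−e_{i+1} for 1 ≤ i ≤ 9 and v = 2h₁+2h₂−e₁−e₂−⋯−e₁₀, and let R ⊆ ℤ¹² be the ℤ-span of r₁,…,r₉,v. Then: (a) B(v,v) = −2 and B(v,rᵢ) = 0 for all i, so that the Gram matrix of (r₁,…,r₉,v) is that of the root lattice A₉ ⊕ A₁; (b) the vector u = h₁+h₂−e₂−e₄−e₆−e₈−e₁₀ satisfies 2u = r₁+r₃+r₅+r₇+r₉+v and u ∉ R; and (c) the saturation of R in ℤ¹² equals R + ℤu, so R has index 2 in its saturation. -/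
namespace Stmt18

/-- The diagonal signs of the bilinear form of `I_{2,10}`: `+1` on the first two coordinates
(the hyperbolic part `h₁, h₂`) and `-1` on the remaining ten (`e₁, …, e₁₀`). -/
def sgn (i : Fin 12) : ℤ := if (i : ℕ) < 2 then 1 else -1

/-- The bilinear form of the odd unimodular lattice `I_{2,10}` on `ℤ¹²`. -/
def B (x y : Fin 12 → ℤ) : ℤ := ∑ i, sgn i * x i * y i

/-- The nine vectors `rᵢ = eᵢ − e_{i+1}`, `1 ≤ i ≤ 9`. -/
def r : Fin 9 → (Fin 12 → ℤ) :=
  ![![0, 0, 1, -1, 0, 0, 0, 0, 0, 0, 0, 0],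
    ![0, 0, 0, 1, -1, 0, 0, 0, 0, 0, 0, 0],
    ![0, 0, 0, 0, 1, -1, 0, 0, 0, 0, 0, 0],
    ![0, 0, 0, 0, 0, 1, -1, 0, 0, 0, 0, 0],
    ![0, 0, 0, 0, 0, 0, 1, -1, 0, 0, 0, 0],
    ![0, 0, 0, 0, 0, 0, 0, 1, -1, 0, 0, 0],
    ![0, 0, 0, 0, 0, 0, 0, 0, 1, -1, 0, 0],
    ![0, 0, 0, 0, 0, 0, 0, 0, 0, 1, -1, 0],
    ![0, 0, 0, 0, 0, 0, 0, 0, 0, 0, 1, -1]]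

/-- `v = 2h₁ + 2h₂ − e₁ − e₂ − ⋯ − e₁₀`. -/
def v : Fin 12 → ℤ := ![2, 2, -1, -1, -1, -1, -1, -1, -1, -1, -1, -1]

/-- `u = h₁ + h₂ − e₂ − e₄ − e₆ − e₈ − e₁₀`. -/
def u : Fin 12 → ℤ := ![1, 1, 0, -1, 0, -1, 0, -1, 0, -1, 0, -1]

/-- The sublattice `R` spanned by `r₁, …, r₉, v`. -/
def R : Submodule ℤ (Fin 12 → ℤ) := Submodule.span ℤ (Set.range r ∪ {v})

/-- The Gram matrix of the root lattice `A₉` in the basis `r₁, …, r₉`: diagonal `−2`,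
entries `1` for neighbouring indices, `0` otherwise. -/
def gramA9 (i j : Fin 9) : ℤ :=
  if i = j then -2
  else if (i : ℕ) + 1 = (j : ℕ) ∨ (j : ℕ) + 1 = (i : ℕ) then 1 else 0



lemma r_apply : ∀ (k : Fin 9) (j : Fin 12),
    r k j = (if (j : ℕ) = (k : ℕ) + 2 then 1 else if (j : ℕ) = (k : ℕ) + 3 then -1 else 0) := by
  decide

lemma u0 : u 0 = 1 := rfl
lemma u1 : u 1 = 1 := rfl
lemma u2 : u 2 = 0 := rfl
lemma u3 : u 3 = -1 := rfl
lemma u4 : u 4 = 0 := rfl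
lemma u5 : u 5 = -1 := rfl
lemma u6 : u 6 = 0 := rfl
lemma u7 : u 7 = -1 := rfl
lemma u8 : u 8 = 0 := rfl
lemma u9 : u 9 = -1 := rfl
lemma u10 : u 10 = 0 := rfl
lemma u11 : u 11 = -1 := rfl

/-- A coordinate linear functional. -/
def lf (c : Fin 12 → ℤ) : (Fin 12 → ℤ) →ₗ[ℤ] ℤ where
  toFun x := ∑ i, c i * x i
  map_add' x y := by simp [mul_add, Finset.sum_add_distrib]
  map_smul' m x := by
    simp only [smul_eq_mul, Pi.smul_apply, RingHom.id_apply, Finset.mul_sum]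
    exact Finset.sum_congr rfl fun i _ => by ring

lemma ap1 (f : Fin 12 → ℤ) : f (Fin.succ 0) = f 1 := rfl
lemma ap2 (f : Fin 12 → ℤ) : f (Fin.succ 0).succ = f 2 := rfl
lemma ap3 (f : Fin 12 → ℤ) : f (Fin.succ 0).succ.succ = f 3 := rfl
lemma ap4 (f : Fin 12 → ℤ) : f (Fin.succ 0).succ.succ.succ = f 4 := rfl
lemma ap5 (f : Fin 12 → ℤ) : f (Fin.succ 0).succ.succ.succ.succ = f 5 := rfl
lemma ap6 (f : Fin 12 → ℤ) : f (Fin.succ 0).succ.succ.succ.succ.succ = f 6 := rfl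
lemma ap7 (f : Fin 12 → ℤ) : f (Fin.succ 0).succ.succ.succ.succ.succ.succ = f 7 := rfl
lemma ap8 (f : Fin 12 → ℤ) : f (Fin.succ 0).succ.succ.succ.succ.succ.succ.succ = f 8 := rfl
lemma ap9 (f : Fin 12 → ℤ) : f (Fin.succ 0).succ.succ.succ.succ.succ.succ.succ.succ = f 9 := rfl
lemma ap10 (f : Fin 12 → ℤ) :
    f (Fin.succ 0).succ.succ.succ.succ.succ.succ.succ.succ.succ = f 10 := rfl
lemma ap11 (f : Fin 12 → ℤ) :
    f (Fin.succ 0).succ.succ.succ.succ.succ.succ.succ.succ.succ.succ = f 11 := rfl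

lemma lf_apply (c x : Fin 12 → ℤ) : lf c x = c 0 * x 0 + c 1 * x 1 + c 2 * x 2 + c 3 * x 3
    + c 4 * x 4 + c 5 * x 5 + c 6 * x 6 + c 7 * x 7 + c 8 * x 8 + c 9 * x 9 + c 10 * x 10
    + c 11 * x 11 := by
  show ∑ i, c i * x i = _
  simp only [Fin.sum_univ_succ, Fin.sum_univ_zero, ap1, ap2, ap3, ap4, ap5, ap6, ap7, ap8,
    ap9, ap10, ap11]
  ring

def c1 : Fin 12 → ℤ := fun j => if j = 0 then 1 else if j = 1 then -1 else 0
def c2 : Fin 12 → ℤ := fun j => if j = 0 then 0 else if j = 1 then 5 else 1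
def cp : Fin 12 → ℤ := fun j => if j = 0 then 0 else if j = 1 then 0 else 1

lemma lfc1 (x : Fin 12 → ℤ) : lf c1 x = x 0 - x 1 := by
  rw [lf_apply]
  simp (config := { decide := true }) only [c1, if_true, if_false]
  ring

lemma lfc2 (x : Fin 12 → ℤ) : lf c2 x = 5 * x 1 + x 2 + x 3 + x 4 + x 5 + x 6 + x 7 + x 8
    + x 9 + x 10 + x 11 := by
  rw [lf_apply]
  simp (config := { decide := true }) only [c2, if_true, if_false]
  ring

lemma r_mem (i : Fin 9) : r i ∈ R := Submodule.subset_span (Or.inl ⟨i, rfl⟩)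
lemma v_mem : v ∈ R := Submodule.subset_span (Or.inr rfl)

lemma two_u : (2 : ℤ) • u = r 0 + r 2 + r 4 + r 6 + r 8 + v := by decide

lemma two_u_mem : (2 : ℤ) • u ∈ R := by
  rw [two_u]
  exact add_mem (add_mem (add_mem (add_mem (add_mem (r_mem 0) (r_mem 2)) (r_mem 4))
    (r_mem 6)) (r_mem 8)) v_mem

lemma R_le_ker (c : Fin 12 → ℤ) (h1 : ∀ i, lf c (r i) = 0) (h2 : lf c v = 0) :
    R ≤ LinearMap.ker (lf c) := by
  rw [R, Submodule.span_le]
  rintro x (⟨i, rfl⟩ | rfl) <;> simp [LinearMap.mem_ker, h1, h2]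

lemma span_r (w : Fin 12 → ℤ) (h0 : w 0 = 0) (h1 : w 1 = 0)
    (hs : w 2 + w 3 + w 4 + w 5 + w 6 + w 7 + w 8 + w 9 + w 10 + w 11 = 0) :
    w ∈ Submodule.span ℤ (Set.range r) := by
  have hw : w = (w 2) • r 0 + (w 2 + w 3) • r 1 + (w 2 + w 3 + w 4) • r 2 +
      (w 2 + w 3 + w 4 + w 5) • r 3 + (w 2 + w 3 + w 4 + w 5 + w 6) • r 4 +
      (w 2 + w 3 + w 4 + w 5 + w 6 + w 7) • r 5 +
      (w 2 + w 3 + w 4 + w 5 + w 6 + w 7 + w 8) • r 6 +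
      (w 2 + w 3 + w 4 + w 5 + w 6 + w 7 + w 8 + w 9) • r 7 +
      (w 2 + w 3 + w 4 + w 5 + w 6 + w 7 + w 8 + w 9 + w 10) • r 8 := by
    funext j
    fin_cases j <;>
    · first
      | show w 0 = _ | show w 1 = _ | show w 2 = _ | show w 3 = _ | show w 4 = _
      | show w 5 = _ | show w 6 = _ | show w 7 = _ | show w 8 = _ | show w 9 = _
      | show w 10 = _ | show w 11 = _
      simp only [Pi.add_apply, Pi.smul_apply, smul_eq_mul, r_apply]
      norm_num
      all_goals omega
  rw [hw]
  have hm : ∀ (a : ℤ) (i : Fin 9), a • r i ∈ Submodule.span ℤ (Set.range r) :=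
    fun a i => Submodule.smul_mem _ a (Submodule.subset_span ⟨i, rfl⟩)
  exact add_mem (add_mem (add_mem (add_mem (add_mem (add_mem (add_mem (add_mem
    (hm _ 0) (hm _ 1)) (hm _ 2)) (hm _ 3)) (hm _ 4)) (hm _ 5)) (hm _ 6)) (hm _ 7)) (hm _ 8)

lemma mem_S (x : Fin 12 → ℤ) (hx1 : lf c1 x = 0) (hx2 : lf c2 x = 0) :
    x ∈ R ⊔ Submodule.span ℤ {u} := by
  rw [lfc1] at hx1
  rw [lfc2] at hx2
  have hw : (x - x 0 • u) ∈ Submodule.span ℤ (Set.range r) := by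
    apply span_r <;>
      simp only [Pi.sub_apply, Pi.smul_apply, smul_eq_mul, u0, u1, u2, u3, u4, u5, u6, u7,
        u8, u9, u10, u11] <;>
      omega
  have hspan : Submodule.span ℤ (Set.range r) ≤ R :=
    Submodule.span_mono Set.subset_union_left
  have hx : x = x 0 • u + (x - x 0 • u) := by abel
  rw [hx]
  exact Submodule.add_mem _
    (Submodule.mem_sup_right (Submodule.mem_span_singleton.2 ⟨x 0, rfl⟩))
    (Submodule.mem_sup_left (hspan hw))

/-- The parity functional. -/
def Φ : (Fin 12 → ℤ) →ₗ[ℤ] ZMod 2 :=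
  (Int.castAddHom (ZMod 2)).toIntLinearMap.comp (lf cp)

lemma R_le_kerΦ : R ≤ LinearMap.ker Φ := by
  rw [R, Submodule.span_le]
  rintro x (⟨i, rfl⟩ | rfl)
  · simp only [SetLike.mem_coe, LinearMap.mem_ker]
    revert i; decide
  · show Φ v = 0
    decide

lemma Φ_u : Φ u = 1 := by decide

lemma mem_R_iff {x : Fin 12 → ℤ} (hx : x ∈ R ⊔ Submodule.span ℤ {u}) :
    x ∈ R ↔ Φ x = 0 := by
  constructor
  · exact fun h => R_le_kerΦ h
  · intro h
    obtain ⟨ρ, hρ, z, hz, rfl⟩ := Submodule.mem_sup.1 hx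
    obtain ⟨m, rfl⟩ := Submodule.mem_span_singleton.1 hz
    have hΦρ : Φ ρ = 0 := R_le_kerΦ hρ
    have hm : Φ (ρ + m • u) = (m : ZMod 2) := by
      rw [map_add, hΦρ, map_smul, Φ_u, zero_add, zsmul_eq_mul, mul_one]
    rw [hm] at h
    obtain ⟨k, rfl⟩ := (ZMod.intCast_zmod_eq_zero_iff_dvd m 2).1 h
    refine Submodule.add_mem _ hρ ?_
    rw [mul_comm, mul_smul]
    exact Submodule.smul_mem _ k two_u_mem

lemma u_mem_S : u ∈ R ⊔ Submodule.span ℤ {u} :=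
  Submodule.mem_sup_right (Submodule.mem_span_singleton_self u)

lemma u_not_mem : u ∉ R := by
  intro h
  have := (mem_R_iff (Submodule.mem_sup_left h)).1 h
  rw [Φ_u] at this
  exact one_ne_zero this

/-- In `I_{2,10}`, the vectors `r₁, …, r₉, v` span a root lattice of type `A₉ ⊕ A₁`, the glue
vector `u = h₁ + h₂ − e₂ − e₄ − e₆ − e₈ − e₁₀` satisfies `2u = r₁+r₃+r₅+r₇+r₉+v` and `u ∉ R`,
and the saturation (primitive hull) of `R` in `ℤ¹²` is `R + ℤu`, in which `R` has index 2. -/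
theorem A9A1_saturation :
    (B v v = -2 ∧ (∀ i : Fin 9, B v (r i) = 0) ∧
      ∀ i j : Fin 9, B (r i) (r j) = gramA9 i j) ∧
    ((2 : ℤ) • u = r 0 + r 2 + r 4 + r 6 + r 8 + v ∧ u ∉ R) ∧
    ({x : Fin 12 → ℤ | ∃ n : ℕ, 0 < n ∧ (n : ℤ) • x ∈ R}
        = ↑(R ⊔ Submodule.span ℤ {u}) ∧
      AddSubgroup.relIndex R.toAddSubgroup (R ⊔ Submodule.span ℤ {u}).toAddSubgroup = 2) := by
  refine ⟨⟨by decide, by decide, by decide⟩, ⟨two_u, u_not_mem⟩, ?_, ?_⟩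
  · ext x
    simp only [Set.mem_setOf_eq, SetLike.mem_coe]
    constructor
    · rintro ⟨n, hn, hnx⟩
      have hker1 : R ≤ LinearMap.ker (lf c1) := R_le_ker c1 (by decide) (by decide)
      have hker2 : R ≤ LinearMap.ker (lf c2) := R_le_ker c2 (by decide) (by decide)
      have hn0 : (n : ℤ) ≠ 0 := Int.natCast_ne_zero.2 hn.ne'
      have h1 : lf c1 x = 0 := by
        have := hker1 hnx
        rw [LinearMap.mem_ker, map_smul, smul_eq_mul, mul_eq_zero] at this
        exact this.resolve_left hn0
      have h2 : lf c2 x = 0 := by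
        have := hker2 hnx
        rw [LinearMap.mem_ker, map_smul, smul_eq_mul, mul_eq_zero] at this
        exact this.resolve_left hn0
      exact mem_S x h1 h2
    · intro hx
      refine ⟨2, two_pos, ?_⟩
      obtain ⟨ρ, hρ, z, hz, rfl⟩ := Submodule.mem_sup.1 hx
      obtain ⟨m, rfl⟩ := Submodule.mem_span_singleton.1 hz
      push_cast
      rw [smul_add, smul_comm (2 : ℤ) m]
      exact Submodule.add_mem _ (Submodule.smul_mem _ _ hρ)
        (Submodule.smul_mem _ m two_u_mem)
  · rw [AddSubgroup.relIndex, AddSubgroup.index_eq_two_iff]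
    refine ⟨⟨u, u_mem_S⟩, fun b => ?_⟩
    have hb : (b : Fin 12 → ℤ) ∈ R ⊔ Submodule.span ℤ {u} := b.2
    have hbu : ((b : Fin 12 → ℤ) + u) ∈ R ⊔ Submodule.span ℤ {u} :=
      Submodule.add_mem _ hb u_mem_S
    have e1 : (b + ⟨u, u_mem_S⟩ ∈ R.toAddSubgroup.addSubgroupOf
        (R ⊔ Submodule.span ℤ {u}).toAddSubgroup) ↔ Φ b + 1 = 0 := by
      rw [AddSubgroup.mem_addSubgroupOf]
      show ((b : Fin 12 → ℤ) + u) ∈ R ↔ _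
      rw [mem_R_iff hbu, map_add, Φ_u]
    have e2 : (b ∈ R.toAddSubgroup.addSubgroupOf
        (R ⊔ Submodule.span ℤ {u}).toAddSubgroup) ↔ Φ b = 0 := by
      rw [AddSubgroup.mem_addSubgroupOf]
      show (b : Fin 12 → ℤ) ∈ R ↔ _
      exact mem_R_iff hb
    rw [e1, e2]
    have hxor : ∀ z : ZMod 2, Xor' (z + 1 = 0) (z = 0) := by unfold Xor'; decide
    exact hxor (Φ b)

end Stmt18
end
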